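/- arXiv:1106.1144 — 2 statements merged into one kernel-verified Lean document; each statement's English description precedes it below -/
import Mathlib

section
/- Spatial semijets of time-differentiable functions yield parabolic semijets: Let ū ∈ C^{1,0}((0,T) × ℝ^d) and let (t̂,ŷ) ∈ (0,T) × ℝ^d. If (p,X) ∈ J̄^{2,+}(ū(t̂,·))(ŷ), where ū(t̂,·) denotes the function y ↦ ū(t̂,y) of the space variable with the time t̂ frozen, then (∂_t ū(t̂,ŷ), p, X) ∈ P̄^{2,+}ū(t̂,ŷ). -/
open scoped RealInnerProductSpace BigOperators
open Filter Asymptotics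

noncomputable section

/-- The Euclidean state space `ℝ^d`. -/
abbrev EucSp (d : ℕ) := EuclideanSpace ℝ (Fin d)

/-- A path with terminal time `t`, recorded as a total function on `ℝ`;
only the values of `f` on `[0, t]` are relevant. -/
structure PPath (d : ℕ) where
  t : ℝ
  f : ℝ → EucSp d

namespace PPath

variable {d : ℕ}

/-- Right continuity of the path on `[0, t]`. -/
def RightCont (ω : PPath d) : Prop :=
  ∀ s ∈ Set.Ico (0:ℝ) ω.t, ContinuousWithinAt ω.f (Set.Ici s) s

/-- `ω ∈ Λ`, i.e. `ω ∈ Λ_t` for some `t ∈ [0, T]`. -/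
def memLambda (T : ℝ) (ω : PPath d) : Prop :=
  0 ≤ ω.t ∧ ω.t ≤ T ∧ ω.RightCont

/-- The vertically shifted path `ω_t^x`: agrees with `ω` on `[0, t)`, terminal value `ω(t) + x`. -/
def vshift (ω : PPath d) (x : EucSp d) : PPath d :=
  ⟨ω.t, fun s => if s < ω.t then ω.f s else ω.f ω.t + x⟩

/-- The horizontally extended ("frozen") path `ω_{t,δ} ∈ Λ_{t+δ}`. -/
def freeze (ω : PPath d) (δ : ℝ) : PPath d :=
  ⟨ω.t + δ, fun s => if s < ω.t then ω.f s else ω.f ω.t⟩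

/-- The truncation `ω_s` of `ω` to the time interval `[0, s]`. -/
def trunc (ω : PPath d) (s : ℝ) : PPath d := ⟨s, ω.f⟩

/-- The concatenation `ω̄_{t̄} ⊗ ω_t`: equals `ω̄` on `[0, t̄)` and `ω` on `[t̄, t]`. -/
def concat (ωb ω : PPath d) : PPath d :=
  ⟨ω.t, fun s => if s < ωb.t then ωb.f s else ω.f s⟩

/-- `ω ∈ Λ_{Q̄}`. -/
def memQbar (T : ℝ) (Q : Set (EucSp d)) (ω : PPath d) : Prop :=
  ω.memLambda T ∧ (∀ s ∈ Set.Ico (0:ℝ) ω.t, ω.f s ∈ Q) ∧ ω.f ω.t ∈ closure Q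

/-- `ω ∈ Λ_Q` (in particular `t < T`). -/
def memQ (T : ℝ) (Q : Set (EucSp d)) (ω : PPath d) : Prop :=
  0 ≤ ω.t ∧ ω.t < T ∧ ω.RightCont ∧ ∀ s ∈ Set.Icc (0:ℝ) ω.t, ω.f s ∈ Q

/-- `ω ∈ Λ_{∂Q}`. -/
def memBdry (T : ℝ) (Q : Set (EucSp d)) (ω : PPath d) : Prop :=
  (ω.memLambda T ∧ (∀ s ∈ Set.Ico (0:ℝ) ω.t, ω.f s ∈ Q) ∧ ω.f ω.t ∈ frontier Q)
    ∨ (ω.t = T ∧ ω.memQbar T Q)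

/-- The path `(ω_t^{y-ω(t)})_{t, s-t}`, parametrized by the absolute time `p.1 = s`
and the absolute terminal position `p.2 = y`. -/
def ext (ω : PPath d) (p : ℝ × EucSp d) : PPath d :=
  (ω.vshift (p.2 - ω.f ω.t)).freeze (p.1 - ω.t)

/-- The path `(ω_t^{y-ω(t)})_{t, δ}`, parametrized by the duration `p.1 = δ`
and the absolute terminal position `p.2 = y`. -/
def extDur (ω : PPath d) (p : ℝ × EucSp d) : PPath d :=
  (ω.vshift (p.2 - ω.f ω.t)).freeze p.1

end PPath

variable {d : ℕ}

/-- The class `USC_*(Λ_{Q̄})`. -/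
def USCstar (T : ℝ) (Q : Set (EucSp d)) (u : PPath d → ℝ) : Prop :=
  (∀ ω : PPath d, ω.memQbar T Q →
    UpperSemicontinuousOn (fun p : ℝ × EucSp d => u (ω.extDur p))
      (Set.Icc (0:ℝ) (T - ω.t) ×ˢ closure Q))
  ∧ (∀ ω : PPath d, ω.memQbar T Q → ∀ ts : ℕ → ℝ,
      (∀ i, 0 ≤ ts i ∧ ts i ≤ ω.t) → Monotone ts →
      Tendsto ts atTop (nhds ω.t) →
      Filter.limsup (fun i => u (ω.trunc (ts i))) atTop ≤
        sSup {y : ℝ | ∃ x : EucSp d, ω.f ω.t + x ∈ closure Q ∧ y = u (ω.vshift x)})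

/-- The class `LSC_*(Λ_{Q̄})`. -/
def LSCstar (T : ℝ) (Q : Set (EucSp d)) (u : PPath d → ℝ) : Prop :=
  USCstar T Q (fun ω => -u ω)

/-- The quadratic form `⟨A x, x⟩` of a matrix. -/
def quadForm (A : Matrix (Fin d) (Fin d) ℝ) (x : EucSp d) : ℝ :=
  ∑ i, ∑ j, A i j * x i * x j

/-- The order `X ≤ Y` on symmetric matrices. -/
def MatLE (X Y : Matrix (Fin d) (Fin d) ℝ) : Prop := (Y - X).PosSemidef

/-- The horizontal (time) derivative `D_t u(ω_t) = a`. -/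
def HasHDeriv (u : PPath d → ℝ) (ω : PPath d) (a : ℝ) : Prop :=
  (fun δ => u (ω.freeze δ) - u ω - a * δ) =o[nhdsWithin 0 (Set.Ioi 0)] (fun δ : ℝ => δ)

/-- The first vertical (space) derivative `D_x u(ω_t) = p`. -/
def HasVDeriv (Q : Set (EucSp d)) (u : PPath d → ℝ) (ω : PPath d) (p : EucSp d) : Prop :=
  (fun x => u (ω.vshift x) - u ω - ⟪p, x⟫)
    =o[nhdsWithin 0 {x : EucSp d | ω.f ω.t + x ∈ Q}] (fun x => ‖x‖)

/-- The second vertical derivative `D²_{xx} u(ω_t) = A` (together with `D_x u(ω_t) = p`). -/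
def HasVDeriv2 (Q : Set (EucSp d)) (u : PPath d → ℝ) (ω : PPath d)
    (p : EucSp d) (A : Matrix (Fin d) (Fin d) ℝ) : Prop :=
  A.IsSymm ∧
  (fun x => u (ω.vshift x) - u ω - ⟪p, x⟫ - (1/2) * quadForm A x)
    =o[nhdsWithin 0 {x : EucSp d | ω.f ω.t + x ∈ Q}] (fun x => ‖x‖^2)

/-- The class `ℂ^{1,2}(Λ_{Q̄})`: a path functional together with its horizontal and
vertical derivatives, which exist on `Λ_Q` and are continuous along frozen extensions. -/
structure C12 (d : ℕ) (T : ℝ) (Q : Set (EucSp d)) where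
  u : PPath d → ℝ
  Dt : PPath d → ℝ
  Dx : PPath d → EucSp d
  Dxx : PPath d → Matrix (Fin d) (Fin d) ℝ
  hasDt : ∀ ω : PPath d, ω.memQ T Q → HasHDeriv u ω (Dt ω)
  hasDx : ∀ ω : PPath d, ω.memQ T Q → HasVDeriv Q u ω (Dx ω)
  hasDxx : ∀ ω : PPath d, ω.memQ T Q → HasVDeriv2 Q u ω (Dx ω) (Dxx ω)
  cont_u : ∀ ω : PPath d, ω.memQ T Q →
    ContinuousOn (fun p : ℝ × EucSp d => u (ω.ext p)) (Set.Ico ω.t T ×ˢ Q)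
  cont_Dt : ∀ ω : PPath d, ω.memQ T Q →
    ContinuousOn (fun p : ℝ × EucSp d => Dt (ω.ext p)) (Set.Ico ω.t T ×ˢ Q)
  cont_Dx : ∀ ω : PPath d, ω.memQ T Q →
    ContinuousOn (fun p : ℝ × EucSp d => Dx (ω.ext p)) (Set.Ico ω.t T ×ˢ Q)
  cont_Dxx : ∀ ω : PPath d, ω.memQ T Q →
    ContinuousOn (fun p : ℝ × EucSp d => Dxx (ω.ext p)) (Set.Ico ω.t T ×ˢ Q)

/-- The class `ℂ^{1,0}(Λ_{Q̄})`: a path functional together with its horizontal derivative. -/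
structure C10 (d : ℕ) (T : ℝ) (Q : Set (EucSp d)) where
  u : PPath d → ℝ
  Dt : PPath d → ℝ
  hasDt : ∀ ω : PPath d, ω.memQ T Q → HasHDeriv u ω (Dt ω)
  cont_u : ∀ ω : PPath d, ω.memQ T Q →
    ContinuousOn (fun p : ℝ × EucSp d => u (ω.ext p)) (Set.Ico ω.t T ×ˢ Q)
  cont_Dt : ∀ ω : PPath d, ω.memQ T Q →
    ContinuousOn (fun p : ℝ × EucSp d => Dt (ω.ext p)) (Set.Ico ω.t T ×ˢ Q)

/-- The parabolic superjet `P^{2,+}u(ω_t)`: `(a,p,X) ∈ P^{2,+}u(ω_t)` iff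
`u((ω_t^x)_{t,δ}) ≤ u(ω_t) + aδ + ⟨p,x⟩ + ½⟨Xx,x⟩ + o(δ + |x|²)` for `δ ≥ 0`,
`ω(t) + x ∈ Q`. -/
def P2plus (Q : Set (EucSp d)) (u : PPath d → ℝ) (ω : PPath d)
    (a : ℝ) (p : EucSp d) (X : Matrix (Fin d) (Fin d) ℝ) : Prop :=
  X.IsSymm ∧
  (fun q : ℝ × EucSp d =>
      max (u ((ω.vshift q.2).freeze q.1) - u ω - a * q.1 - ⟪p, q.2⟫
        - (1/2) * quadForm X q.2) 0)
    =o[nhdsWithin 0 {q : ℝ × EucSp d | 0 ≤ q.1 ∧ ω.f ω.t + q.2 ∈ Q}]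
    (fun q : ℝ × EucSp d => q.1 + ‖q.2‖^2)

/-- The parabolic subjet `P^{2,−}u(ω_t) = −P^{2,+}(−u)(ω_t)`. -/
def P2minus (Q : Set (EucSp d)) (u : PPath d → ℝ) (ω : PPath d)
    (a : ℝ) (p : EucSp d) (X : Matrix (Fin d) (Fin d) ℝ) : Prop :=
  P2plus Q (fun γ => -u γ) ω (-a) (-p) (-X)

/-- The first order superjet `P^{1,+}u(ω_t)`. -/
def P1plus (Q : Set (EucSp d)) (u : PPath d → ℝ) (ω : PPath d)
    (a : ℝ) (p : EucSp d) : Prop :=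
  (fun q : ℝ × EucSp d =>
      max (u ((ω.vshift q.2).freeze q.1) - u ω - a * q.1 - ⟪p, q.2⟫) 0)
    =o[nhdsWithin 0 {q : ℝ × EucSp d | 0 ≤ q.1 ∧ ω.f ω.t + q.2 ∈ Q}]
    (fun q : ℝ × EucSp d => q.1 + ‖q.2‖)

/-- The first order subjet `P^{1,−}u(ω_t) = −P^{1,+}(−u)(ω_t)`. -/
def P1minus (Q : Set (EucSp d)) (u : PPath d → ℝ) (ω : PPath d)
    (a : ℝ) (p : EucSp d) : Prop :=
  P1plus Q (fun γ => -u γ) ω (-a) (-p)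

/-- The distance `d(ω_t, υ_s) = |ω(t)−υ(s)|² + ∫_0^{t∨s} |ω(r∧t)−υ(r∧s)|² dr`. -/
def pdist (ω υ : PPath d) : ℝ :=
  ‖ω.f ω.t - υ.f υ.t‖^2 +
    ∫ r in (0:ℝ)..(max ω.t υ.t), ‖ω.f (min r ω.t) - υ.f (min r υ.t)‖^2

/-- The distance `d₁(γ_s, γ̄_{s̄}) = |γ(s)−γ̄(s̄)|² + |s−s̄|² +
∫_0^{s∧s̄} (s∧s̄−r)|γ(r)−γ̄(r)|² dr`. -/
def pdist1 (γ γb : PPath d) : ℝ :=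
  ‖γ.f γ.t - γb.f γb.t‖^2 + |γ.t - γb.t|^2 +
    ∫ r in (0:ℝ)..(min γ.t γb.t), (min γ.t γb.t - r) * ‖γ.f r - γb.f r‖^2

/-- The closure `P̄^{2,+}u(ω_t)` of the parabolic superjet. -/
def P2plusBar (T : ℝ) (Q : Set (EucSp d)) (u : PPath d → ℝ) (ω : PPath d)
    (a : ℝ) (p : EucSp d) (X : Matrix (Fin d) (Fin d) ℝ) : Prop :=
  ∃ (ωn : ℕ → PPath d) (an : ℕ → ℝ) (pn : ℕ → EucSp d)
    (Xn : ℕ → Matrix (Fin d) (Fin d) ℝ),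
    (∀ n, (ωn n).memQ T Q) ∧
    (∀ n, P2plus Q u (ωn n) (an n) (pn n) (Xn n)) ∧
    Tendsto (fun n => (ωn n).t) atTop (nhds ω.t) ∧
    Tendsto (fun n => pdist (ωn n) ω) atTop (nhds 0) ∧
    Tendsto (fun n => u (ωn n)) atTop (nhds (u ω)) ∧
    Tendsto an atTop (nhds a) ∧ Tendsto pn atTop (nhds p) ∧
    Tendsto Xn atTop (nhds X)

/-- The closure `P̄^{2,−}u(ω_t) = −P̄^{2,+}(−u)(ω_t)`. -/
def P2minusBar (T : ℝ) (Q : Set (EucSp d)) (u : PPath d → ℝ) (ω : PPath d)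
    (a : ℝ) (p : EucSp d) (X : Matrix (Fin d) (Fin d) ℝ) : Prop :=
  P2plusBar T Q (fun γ => -u γ) ω (-a) (-p) (-X)

/-- Viscosity subsolution of `D_t u + G(u, D_x u, D²_{xx} u) = 0` on `Λ_{Q̄}`. -/
def ViscSubsol2 (T : ℝ) (Q : Set (EucSp d))
    (G : ℝ → EucSp d → Matrix (Fin d) (Fin d) ℝ → ℝ) (u : PPath d → ℝ) : Prop :=
  USCstar T Q u ∧
  ∀ ω : PPath d, ω.memQ T Q → ∀ a p X, P2plus Q u ω a p X → 0 ≤ a + G (u ω) p X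

/-- Viscosity supersolution of `D_t u + G(u, D_x u, D²_{xx} u) = 0` on `Λ_{Q̄}`. -/
def ViscSupersol2 (T : ℝ) (Q : Set (EucSp d))
    (G : ℝ → EucSp d → Matrix (Fin d) (Fin d) ℝ → ℝ) (v : PPath d → ℝ) : Prop :=
  LSCstar T Q v ∧
  ∀ ω : PPath d, ω.memQ T Q → ∀ a p X, P2minus Q v ω a p X → a + G (v ω) p X ≤ 0

/-- Viscosity subsolution of the first order equation `D_t u + G(u, D_x u) = 0`. -/
def ViscSubsol1 (T : ℝ) (Q : Set (EucSp d)) (G : ℝ → EucSp d → ℝ)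
    (u : PPath d → ℝ) : Prop :=
  USCstar T Q u ∧
  ∀ ω : PPath d, ω.memQ T Q → ∀ a p, P1plus Q u ω a p → 0 ≤ a + G (u ω) p

/-- Viscosity supersolution of the first order equation `D_t u + G(u, D_x u) = 0`. -/
def ViscSupersol1 (T : ℝ) (Q : Set (EucSp d)) (G : ℝ → EucSp d → ℝ)
    (v : PPath d → ℝ) : Prop :=
  LSCstar T Q v ∧
  ∀ ω : PPath d, ω.memQ T Q → ∀ a p, P1minus Q v ω a p → a + G (v ω) p ≤ 0

/-- Condition (H2): `G` is continuous and `G(u,p,X) ≥ G(v,p,Y)` whenever `X ≥ Y`, `u ≤ v`. -/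
def H2 (G : ℝ → EucSp d → Matrix (Fin d) (Fin d) ℝ → ℝ) : Prop :=
  Continuous (fun q : ℝ × EucSp d × Matrix (Fin d) (Fin d) ℝ => G q.1 q.2.1 q.2.2) ∧
  ∀ r s : ℝ, ∀ p : EucSp d, ∀ X Y : Matrix (Fin d) (Fin d) ℝ,
    MatLE Y X → r ≤ s → G s p Y ≤ G r p X

/-- A modulus of continuity: continuous, increasing, vanishing at `0`. -/
def IsModulus (ρ : ℝ → ℝ) : Prop :=
  ContinuousOn ρ (Set.Ici 0) ∧ MonotoneOn ρ (Set.Ici 0) ∧ ρ 0 = 0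

/-- The classical parabolic superjet `P^{2,+}w(t̂,x̂)` (one-sided in time, `t ≥ t̂`),
for a function `w` of `(t,x)` on a domain `D`. -/
def CP2plus (D : Set (ℝ × EucSp d)) (w : ℝ × EucSp d → ℝ) (z : ℝ × EucSp d)
    (b : ℝ) (q : EucSp d) (X : Matrix (Fin d) (Fin d) ℝ) : Prop :=
  X.IsSymm ∧
  (fun p : ℝ × EucSp d =>
      max (w (z.1 + p.1, z.2 + p.2) - w z - b * p.1 - ⟪q, p.2⟫
        - (1/2) * quadForm X p.2) 0)
    =o[nhdsWithin 0 {p : ℝ × EucSp d | 0 ≤ p.1 ∧ (z.1 + p.1, z.2 + p.2) ∈ D}]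
    (fun p : ℝ × EucSp d => |p.1| + ‖p.2‖^2)

/-- The closure of the classical parabolic superjet (one-sided in time). -/
def CP2plusBar (D : Set (ℝ × EucSp d)) (w : ℝ × EucSp d → ℝ) (z : ℝ × EucSp d)
    (b : ℝ) (q : EucSp d) (X : Matrix (Fin d) (Fin d) ℝ) : Prop :=
  ∃ (zn : ℕ → ℝ × EucSp d) (bn : ℕ → ℝ) (qn : ℕ → EucSp d)
    (Xn : ℕ → Matrix (Fin d) (Fin d) ℝ),
    (∀ n, zn n ∈ D) ∧
    (∀ n, CP2plus D w (zn n) (bn n) (qn n) (Xn n)) ∧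
    Tendsto zn atTop (nhds z) ∧
    Tendsto (fun n => w (zn n)) atTop (nhds (w z)) ∧
    Tendsto bn atTop (nhds b) ∧ Tendsto qn atTop (nhds q) ∧ Tendsto Xn atTop (nhds X)

/-- The classical parabolic subjet (one-sided in time). -/
def CP2minus (D : Set (ℝ × EucSp d)) (w : ℝ × EucSp d → ℝ) (z : ℝ × EucSp d)
    (b : ℝ) (q : EucSp d) (X : Matrix (Fin d) (Fin d) ℝ) : Prop :=
  CP2plus D (fun y => -w y) z (-b) (-q) (-X)

/-- The closure of the classical parabolic subjet (one-sided in time). -/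
def CP2minusBar (D : Set (ℝ × EucSp d)) (w : ℝ × EucSp d → ℝ) (z : ℝ × EucSp d)
    (b : ℝ) (q : EucSp d) (X : Matrix (Fin d) (Fin d) ℝ) : Prop :=
  CP2plusBar D (fun y => -w y) z (-b) (-q) (-X)

/-- The classical parabolic superjet `P^{2,+}w(t̂,x̂)` with two-sided time increments. -/
def CP2plusTS (D : Set (ℝ × EucSp d)) (w : ℝ × EucSp d → ℝ) (z : ℝ × EucSp d)
    (b : ℝ) (q : EucSp d) (X : Matrix (Fin d) (Fin d) ℝ) : Prop :=
  X.IsSymm ∧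
  (fun p : ℝ × EucSp d =>
      max (w (z.1 + p.1, z.2 + p.2) - w z - b * p.1 - ⟪q, p.2⟫
        - (1/2) * quadForm X p.2) 0)
    =o[nhdsWithin 0 {p : ℝ × EucSp d | (z.1 + p.1, z.2 + p.2) ∈ D}]
    (fun p : ℝ × EucSp d => |p.1| + ‖p.2‖^2)

/-- The closure of the two-sided classical parabolic superjet. -/
def CP2plusTSBar (D : Set (ℝ × EucSp d)) (w : ℝ × EucSp d → ℝ) (z : ℝ × EucSp d)
    (b : ℝ) (q : EucSp d) (X : Matrix (Fin d) (Fin d) ℝ) : Prop :=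
  ∃ (zn : ℕ → ℝ × EucSp d) (bn : ℕ → ℝ) (qn : ℕ → EucSp d)
    (Xn : ℕ → Matrix (Fin d) (Fin d) ℝ),
    (∀ n, zn n ∈ D) ∧
    (∀ n, CP2plusTS D w (zn n) (bn n) (qn n) (Xn n)) ∧
    Tendsto zn atTop (nhds z) ∧
    Tendsto (fun n => w (zn n)) atTop (nhds (w z)) ∧
    Tendsto bn atTop (nhds b) ∧ Tendsto qn atTop (nhds q) ∧ Tendsto Xn atTop (nhds X)

/-- The purely spatial second order superjet `J^{2,+}f(ŷ)` on a domain `D ⊆ ℝ^d`. -/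
def J2plus (D : Set (EucSp d)) (f : EucSp d → ℝ) (yh p : EucSp d)
    (X : Matrix (Fin d) (Fin d) ℝ) : Prop :=
  X.IsSymm ∧
  (fun y : EucSp d => max (f (yh + y) - f yh - ⟪p, y⟫ - (1/2) * quadForm X y) 0)
    =o[nhdsWithin 0 {y : EucSp d | yh + y ∈ D}] (fun y : EucSp d => ‖y‖^2)

/-- The closure `J̄^{2,+}f(ŷ)` of the spatial second order superjet. -/
def J2plusBar (D : Set (EucSp d)) (f : EucSp d → ℝ) (yh p : EucSp d)
    (X : Matrix (Fin d) (Fin d) ℝ) : Prop :=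
  ∃ (yn pn : ℕ → EucSp d) (Xn : ℕ → Matrix (Fin d) (Fin d) ℝ),
    (∀ j, yn j ∈ D ∧ J2plus D f (yn j) (pn j) (Xn j)) ∧
    Tendsto yn atTop (nhds yh) ∧ Tendsto (fun j => f (yn j)) atTop (nhds (f yh)) ∧
    Tendsto pn atTop (nhds p) ∧ Tendsto Xn atTop (nhds X)

/-- The class `USC_*(Λ_{Q̄} × Λ_{Q̄})` of two-path functionals. -/
def USCstar2 (T : ℝ) (Q : Set (EucSp d)) (u : PPath d → PPath d → ℝ) : Prop :=
  (∀ ω υ : PPath d, ω.memQbar T Q → υ.memQbar T Q →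
    UpperSemicontinuousOn
      (fun p : (ℝ × EucSp d) × (ℝ × EucSp d) => u (ω.extDur p.1) (υ.extDur p.2))
      ((Set.Icc (0:ℝ) (T - ω.t) ×ˢ closure Q) ×ˢ (Set.Icc (0:ℝ) (T - υ.t) ×ˢ closure Q)))
  ∧ (∀ ω υ : PPath d, ω.memQbar T Q → υ.memQbar T Q → ∀ ts ss : ℕ → ℝ,
      (∀ i, 0 ≤ ts i ∧ ts i ≤ ω.t) → Monotone ts → Tendsto ts atTop (nhds ω.t) →
      (∀ i, 0 ≤ ss i ∧ ss i ≤ υ.t) → Monotone ss → Tendsto ss atTop (nhds υ.t) →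
      Filter.limsup (fun i => u (ω.trunc (ts i)) (υ.trunc (ss i))) atTop ≤
        sSup {y : ℝ | ∃ x z : EucSp d, ω.f ω.t + x ∈ closure Q ∧
          υ.f υ.t + z ∈ closure Q ∧ y = u (ω.vshift x) (υ.vshift z)})

/-- `‖ω¹_t − ω²_t‖² = |ω¹(t) − ω²(t)|² + ∫_0^t |ω¹(s) − ω²(s)|² ds`
for two paths with the same terminal time. -/
def pairNormSq (ω1 ω2 : PPath d) : ℝ :=
  ‖ω1.f ω1.t - ω2.f ω2.t‖^2 + ∫ s in (0:ℝ)..ω1.t, ‖ω1.f s - ω2.f s‖^2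

lemma key_step {d : ℕ} {T : ℝ}
    (w Dtw : ℝ × EucSp d → ℝ)
    (hderiv : ∀ z : ℝ × EucSp d, z.1 ∈ Set.Ioo (0:ℝ) T →
      HasDerivAt (fun τ : ℝ => w (τ, z.2)) (Dtw z) z.1)
    (hDtwc : ContinuousOn Dtw (Set.Ioo (0:ℝ) T ×ˢ (Set.univ : Set (EucSp d))))
    (th : ℝ) (hth : th ∈ Set.Ioo (0:ℝ) T) (yn : EucSp d)
    (pn : EucSp d) (Xn : Matrix (Fin d) (Fin d) ℝ)
    (hJ : J2plus (Set.univ : Set (EucSp d)) (fun y => w (th, y)) yn pn Xn) :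
    CP2plusTS (Set.Ioo (0:ℝ) T ×ˢ (Set.univ : Set (EucSp d))) w (th, yn)
      (Dtw (th, yn)) pn Xn := by
  obtain ⟨hsym, hlo⟩ := hJ
  refine ⟨hsym, ?_⟩
  rw [isLittleO_iff]
  intro c hc
  have hopen : IsOpen (Set.Ioo (0:ℝ) T ×ˢ (Set.univ : Set (EucSp d))) :=
    isOpen_Ioo.prod isOpen_univ
  have hmem : ((th, yn) : ℝ × EucSp d) ∈ Set.Ioo (0:ℝ) T ×ˢ Set.univ := ⟨hth, trivial⟩
  have hca : ContinuousAt Dtw (th, yn) := hDtwc.continuousAt (hopen.mem_nhds hmem)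
  obtain ⟨r₁, hr₁, hball⟩ := Metric.continuousAt_iff.mp hca (c/2) (by linarith)
  obtain ⟨r₂, hr₂, hsub⟩ := Metric.isOpen_iff.mp isOpen_Ioo th hth
  have hset : {y : EucSp d | yn + y ∈ (Set.univ : Set (EucSp d))} = Set.univ := by
    ext y; simp
  rw [hset, nhdsWithin_univ, isLittleO_iff] at hlo
  obtain ⟨r₃, hr₃, hy'⟩ := Metric.eventually_nhds_iff.mp
    (hlo (show (0:ℝ) < c/2 by linarith))
  set b := Dtw (th, yn) with hb
  set r := min r₁ (min r₂ r₃) with hrdef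
  have hrpos : 0 < r := lt_min hr₁ (lt_min hr₂ hr₃)
  have hrr₁ : r ≤ r₁ := min_le_left _ _
  have hrr₂ : r ≤ r₂ := le_trans (min_le_right _ _) (min_le_left _ _)
  have hrr₃ : r ≤ r₃ := le_trans (min_le_right _ _) (min_le_right _ _)
  apply Filter.Eventually.filter_mono nhdsWithin_le_nhds
  filter_upwards [Metric.ball_mem_nhds (0 : ℝ × EucSp d) hrpos] with q hq
  have hq1 : |q.1| < r := by
    have h1 : dist q.1 (0:ℝ) ≤ dist q (0 : ℝ × EucSp d) := by
      rw [Prod.dist_eq]; exact le_max_left _ _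
    have := lt_of_le_of_lt h1 (Metric.mem_ball.mp hq)
    simpa [Real.dist_eq] using this
  have hq2 : ‖q.2‖ < r := by
    have h1 : dist q.2 (0 : EucSp d) ≤ dist q (0 : ℝ × EucSp d) := by
      rw [Prod.dist_eq]; exact le_max_right _ _
    have := lt_of_le_of_lt h1 (Metric.mem_ball.mp hq)
    simpa [dist_eq_norm] using this
  -- bound on the time increment via the mean value inequality
  set A : ℝ := w (th + q.1, yn + q.2) - w (th, yn + q.2) - b * q.1 with hA
  have hAbound : |A| ≤ (c/2) * |q.1| := by
    have hconv : Convex ℝ (Metric.ball th r) := convex_ball _ _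
    have hderiv' : ∀ τ ∈ Metric.ball th r,
        HasDerivWithinAt (fun τ : ℝ => w (τ, yn + q.2) - b * τ)
          (Dtw (τ, yn + q.2) - b) (Metric.ball th r) τ := by
      intro τ hτ
      have hτIoo : τ ∈ Set.Ioo (0:ℝ) T :=
        hsub (Metric.ball_subset_ball hrr₂ hτ)
      have h1 : HasDerivAt (fun τ : ℝ => w (τ, yn + q.2)) (Dtw (τ, yn + q.2)) τ :=
        hderiv (τ, yn + q.2) hτIoo
      have h2 : HasDerivAt (fun τ : ℝ => b * τ) b τ := by
        simpa using (hasDerivAt_id τ).const_mul b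
      exact (h1.sub h2).hasDerivWithinAt
    have hbd : ∀ τ ∈ Metric.ball th r, ‖Dtw (τ, yn + q.2) - b‖ ≤ c/2 := by
      intro τ hτ
      have hd : dist ((τ, yn + q.2) : ℝ × EucSp d) (th, yn) < r₁ := by
        rw [Prod.dist_eq]
        refine max_lt (lt_of_lt_of_le (Metric.mem_ball.mp hτ) hrr₁) ?_
        simpa [dist_eq_norm] using lt_of_lt_of_le hq2 hrr₁
      have := hball hd
      rw [Real.dist_eq] at this
      exact le_of_lt (by simpa [Real.norm_eq_abs, hb] using this)
    have hthmem : th ∈ Metric.ball th r := Metric.mem_ball_self hrpos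
    have hth2 : th + q.1 ∈ Metric.ball th r := by
      rw [Metric.mem_ball, Real.dist_eq]
      simpa using hq1
    have := hconv.norm_image_sub_le_of_norm_hasDerivWithin_le hderiv' hbd hthmem hth2
    calc |A| = ‖(w (th + q.1, yn + q.2) - b * (th + q.1)) - (w (th, yn + q.2) - b * th)‖ := by
          rw [Real.norm_eq_abs]; congr 1; ring
      _ ≤ (c/2) * ‖(th + q.1) - th‖ := this
      _ = (c/2) * |q.1| := by rw [Real.norm_eq_abs]; ring_nf
  -- bound on the space increment via the spatial jet
  set B : ℝ := w (th, yn + q.2) - w (th, yn) - ⟪pn, q.2⟫ - (1/2) * quadForm Xn q.2 with hB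
  have hBbound : max B 0 ≤ (c/2) * ‖q.2‖^2 := by
    have hd : dist q.2 (0 : EucSp d) < r₃ := by
      rw [dist_eq_norm]; simpa using lt_of_lt_of_le hq2 hrr₃
    have := hy' hd
    rw [Real.norm_of_nonneg (le_max_right _ 0)] at this
    calc max B 0 ≤ c/2 * ‖‖q.2‖^2‖ := this
      _ = (c/2) * ‖q.2‖^2 := by rw [Real.norm_of_nonneg (by positivity)]
  -- combine
  have hsumnn : (0:ℝ) ≤ |q.1| + ‖q.2‖^2 := by positivity
  have hmain : max (w ((th, yn).1 + q.1, (th, yn).2 + q.2) - w (th, yn) - b * q.1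
      - ⟪pn, q.2⟫ - (1/2) * quadForm Xn q.2) 0 ≤ c * (|q.1| + ‖q.2‖^2) := by
    have hAB : w ((th, yn).1 + q.1, (th, yn).2 + q.2) - w (th, yn) - b * q.1
        - ⟪pn, q.2⟫ - (1/2) * quadForm Xn q.2 = A + B := by
      simp only [hA, hB]; ring
    rw [hAB]
    have h1 : max (A + B) 0 ≤ max A 0 + max B 0 :=
      max_le (add_le_add (le_max_left _ _) (le_max_left _ _))
        (add_nonneg (le_max_right _ _) (le_max_right _ _))
    have h2 : max A 0 ≤ |A| := max_le (le_abs_self _) (abs_nonneg _)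
    have h3 : |q.1| + ‖q.2‖^2 ≤ 2 * (|q.1| + ‖q.2‖^2) := by nlinarith
    calc max (A + B) 0 ≤ max A 0 + max B 0 := h1
      _ ≤ (c/2) * |q.1| + (c/2) * ‖q.2‖^2 := add_le_add (le_trans h2 hAbound) hBbound
      _ ≤ c * (|q.1| + ‖q.2‖^2) := by nlinarith
  calc ‖max (w ((th, yn).1 + q.1, (th, yn).2 + q.2) - w (th, yn) - b * q.1
        - ⟪pn, q.2⟫ - (1/2) * quadForm Xn q.2) 0‖
      = max (w ((th, yn).1 + q.1, (th, yn).2 + q.2) - w (th, yn) - b * q.1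
        - ⟪pn, q.2⟫ - (1/2) * quadForm Xn q.2) 0 :=
        Real.norm_of_nonneg (le_max_right _ 0)
    _ ≤ c * (|q.1| + ‖q.2‖^2) := hmain
    _ = c * ‖|q.1| + ‖q.2‖^2‖ := by rw [Real.norm_of_nonneg hsumnn]

/-- **Spatial semijets of time-differentiable functions yield parabolic semijets**
(Lemma 5.4): for `w ∈ C^{1,0}((0,T) × ℝ^d)` and
`(p, X) ∈ J̄^{2,+}(w(t̂, ·))(ŷ)` one has `(∂_t w(t̂, ŷ), p, X) ∈ P̄^{2,+}w(t̂, ŷ)`. -/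
theorem spatial_semijet_to_parabolic_semijet
    {d : ℕ} {T : ℝ} (hT : 0 < T)
    (w Dtw : ℝ × EucSp d → ℝ)
    (hderiv : ∀ z : ℝ × EucSp d, z.1 ∈ Set.Ioo (0:ℝ) T →
      HasDerivAt (fun τ : ℝ => w (τ, z.2)) (Dtw z) z.1)
    (hwc : ContinuousOn w (Set.Ioo (0:ℝ) T ×ˢ (Set.univ : Set (EucSp d))))
    (hDtwc : ContinuousOn Dtw (Set.Ioo (0:ℝ) T ×ˢ (Set.univ : Set (EucSp d))))
    (th : ℝ) (hth : th ∈ Set.Ioo (0:ℝ) T) (yh : EucSp d)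
    (p : EucSp d) (X : Matrix (Fin d) (Fin d) ℝ)
    (hJ : J2plusBar (Set.univ : Set (EucSp d)) (fun y => w (th, y)) yh p X) :
    CP2plusTSBar (Set.Ioo (0:ℝ) T ×ˢ (Set.univ : Set (EucSp d))) w (th, yh)
      (Dtw (th, yh)) p X := by
  obtain ⟨yn, pn, Xn, hjet, hyn, hfyn, hpn, hXn⟩ := hJ
  refine ⟨fun n => (th, yn n), fun n => Dtw (th, yn n), pn, Xn, ?_, ?_, ?_, ?_, ?_, hpn, hXn⟩
  · intro n; exact ⟨hth, trivial⟩
  · intro n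
    exact key_step w Dtw hderiv hDtwc th hth (yn n) (pn n) (Xn n) (hjet n).2
  · exact Tendsto.prodMk_nhds tendsto_const_nhds hyn
  · exact hfyn
  · have hopen : IsOpen (Set.Ioo (0:ℝ) T ×ˢ (Set.univ : Set (EucSp d))) :=
      isOpen_Ioo.prod isOpen_univ
    have hca : ContinuousAt Dtw (th, yh) :=
      hDtwc.continuousAt (hopen.mem_nhds ⟨hth, trivial⟩)
    exact hca.tendsto.comp (Tendsto.prodMk_nhds tendsto_const_nhds hyn)
end
end

section
/- Vertical semijets of ℂ^{1,0} path functionals yield path parabolic semijets: Let u ∈ ℂ^{1,0}(Λ_{Q̄}) and ω̂_{t̂} ∈ Λ_Q with t̂ ∈ (0,T). Define ū(x) := u((ω̂_{t̂})^x) for x ∈ ℝ^d with x + ω̂(t̂) ∈ Q. If (p,X) ∈ J̄^{2,+}ū(0), then (D_t u(ω̂_{t̂}), p, X) ∈ P̄^{2,+}u(ω̂_{t̂}). -/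
open scoped RealInnerProductSpace BigOperators
open Filter Asymptotics

noncomputable section

variable {d : ℕ}

section Aux

variable {d : ℕ}

lemma ppath_eq {ω υ : PPath d} (h1 : ω.t = υ.t) (h2 : ω.f = υ.f) : ω = υ := by
  cases ω; cases υ; cases h1; cases h2; rfl

lemma vshift_f_self (ω : PPath d) (x : EucSp d) :
    (ω.vshift x).f (ω.vshift x).t = ω.f ω.t + x := by
  simp [PPath.vshift]

lemma vshift_vshift (ω : PPath d) (x y : EucSp d) :
    (ω.vshift x).vshift y = ω.vshift (x + y) := by
  refine ppath_eq rfl (funext fun s => ?_)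
  by_cases h : s < ω.t <;> simp [PPath.vshift, h, add_assoc]

lemma freeze_vshift_zero (ω : PPath d) (y : EucSp d) :
    (ω.vshift y).freeze 0 = ω.vshift y := by
  refine ppath_eq (add_zero _) (funext fun s => ?_)
  by_cases h : s < ω.t <;> simp [PPath.freeze, PPath.vshift, h]

lemma freeze_freeze (ω : PPath d) {s : ℝ} (hs : 0 ≤ s) (σ : ℝ) :
    (ω.freeze s).freeze σ = ω.freeze (s + σ) := by
  refine ppath_eq (by show ω.t + s + σ = ω.t + (s + σ); ring) (funext fun w => ?_)
  show (if w < ω.t + s then (ω.freeze s).f w else (ω.freeze s).f (ω.t + s))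
      = (if w < ω.t then ω.f w else ω.f ω.t)
  have hts : ¬ (ω.t + s < ω.t) := by linarith
  by_cases h2 : w < ω.t
  · have h1 : w < ω.t + s := by linarith
    simp [PPath.freeze, h1, h2]
  · by_cases h1 : w < ω.t + s
    · simp [PPath.freeze, h1, h2]
    · simp [PPath.freeze, h1, h2, hts]

lemma ext_eq (ω : PPath d) (s : ℝ) (y : EucSp d) :
    ω.ext (ω.t + s, ω.f ω.t + y) = (ω.vshift y).freeze s := by
  unfold PPath.ext
  simp

lemma ext_self (ω : PPath d) (y : EucSp d) :
    ω.ext (ω.t, ω.f ω.t + y) = ω.vshift y := by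
  have h := ext_eq ω 0 y
  rw [add_zero] at h
  rw [h, freeze_vshift_zero]

lemma vshift_zero_freeze (ω : PPath d) (δ : ℝ) :
    (ω.vshift 0).freeze δ = ω.freeze δ := by
  refine ppath_eq rfl (funext fun s => ?_)
  by_cases h : s < ω.t <;> simp [PPath.freeze, PPath.vshift, h]

lemma rightCont_capped {ω : PPath d} (hrc : ω.RightCont) (z : EucSp d) (τ : ℝ) :
    PPath.RightCont (⟨τ, fun v => if v < ω.t then ω.f v else z⟩ : PPath d) := by
  intro w hw
  by_cases h : w < ω.t
  · have h1 : ContinuousWithinAt ω.f (Set.Ici w) w := hrc w ⟨hw.1, h⟩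
    refine h1.congr_of_eventuallyEq ?_ (by simp [h])
    filter_upwards [nhdsWithin_le_nhds (Iio_mem_nhds h : Set.Iio ω.t ∈ nhds w)] with v hv
    simp [Set.mem_Iio.mp hv]
  · refine (continuousWithinAt_const (b := z)).congr (fun v hv => ?_) (by simp [h])
    have : ¬ v < ω.t := by
      push_neg at h ⊢
      exact le_trans h hv
    simp [this]

lemma memQ_vshift_freeze {T : ℝ} {Q : Set (EucSp d)} {ω : PPath d} (hω : ω.memQ T Q)
    {y : EucSp d} (hy : ω.f ω.t + y ∈ Q) {s : ℝ} (hs : 0 ≤ s) (hsT : ω.t + s < T) :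
    ((ω.vshift y).freeze s).memQ T Q := by
  obtain ⟨ht0, htT, hrc, hmem⟩ := hω
  have hfz : (ω.vshift y).freeze s
      = ⟨ω.t + s, fun v => if v < ω.t then ω.f v else ω.f ω.t + y⟩ := by
    refine ppath_eq rfl (funext fun v => ?_)
    by_cases h : v < ω.t <;> simp [PPath.freeze, PPath.vshift, h]
  rw [hfz]
  refine ⟨by simpa using by linarith, hsT, rightCont_capped hrc _ _, fun v hv => ?_⟩
  by_cases h : v < ω.t
  · simpa [h] using hmem v ⟨hv.1, h.le⟩
  · simpa [h] using hy

lemma memQ_vshift {T : ℝ} {Q : Set (EucSp d)} {ω : PPath d} (hω : ω.memQ T Q)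
    {y : EucSp d} (hy : ω.f ω.t + y ∈ Q) : (ω.vshift y).memQ T Q := by
  rw [← freeze_vshift_zero]
  exact memQ_vshift_freeze hω hy le_rfl (by simpa using hω.2.1)

lemma hderiv_unique {u : PPath d → ℝ} {ω ω' : PPath d} {a a' : ℝ}
    (h : HasHDeriv u ω a) (h' : HasHDeriv u ω' a')
    (hf : ∀ δ, ω'.freeze δ = ω.freeze δ) : u ω' = u ω ∧ a' = a := by
  rw [HasHDeriv] at h h'
  simp only [hf] at h'
  have hd : (fun δ : ℝ => (u ω' - u ω) + (a' - a) * δ)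
      =o[nhdsWithin 0 (Set.Ioi 0)] (fun δ : ℝ => δ) :=
    (h.sub h').congr_left fun δ => by ring
  have hid : Tendsto (fun δ : ℝ => δ) (nhdsWithin 0 (Set.Ioi 0)) (nhds 0) :=
    tendsto_id.mono_left nhdsWithin_le_nhds
  have h0 : Tendsto (fun δ : ℝ => (u ω' - u ω) + (a' - a) * δ)
      (nhdsWithin 0 (Set.Ioi 0)) (nhds 0) := hd.isBigO.trans_tendsto hid
  have hc : Tendsto (fun δ : ℝ => (u ω' - u ω) + (a' - a) * δ)
      (nhdsWithin 0 (Set.Ioi 0)) (nhds (u ω' - u ω)) := by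
    have hcont : Continuous fun δ : ℝ => (u ω' - u ω) + (a' - a) * δ := by continuity
    simpa using (hcont.tendsto 0).mono_left nhdsWithin_le_nhds
  have huu : u ω' = u ω := by
    have := tendsto_nhds_unique hc h0
    linarith
  refine ⟨huu, ?_⟩
  rw [huu] at hd
  simp only [sub_self, zero_add] at hd
  by_contra hne
  have hb : 0 < |a' - a| := abs_pos.2 (sub_ne_zero.2 hne)
  obtain ⟨δ, hδmem, hδ⟩ := (eventually_mem_nhdsWithin.and (hd.def (half_pos hb))).exists
  rw [Real.norm_eq_abs, Real.norm_eq_abs, abs_mul] at hδ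
  have hδpos : (0:ℝ) < δ := hδmem
  rw [abs_of_pos hδpos] at hδ
  nlinarith

lemma pdist_vshift (ω : PPath d) (y : EucSp d) (ht : 0 ≤ ω.t) :
    pdist (ω.vshift y) ω = ‖y‖^2 := by
  have h1 : (ω.vshift y).t = ω.t := rfl
  have h2 : (ω.vshift y).f (ω.vshift y).t - ω.f ω.t = y := by
    rw [vshift_f_self]; abel
  have h3 : (∫ r in (0:ℝ)..(max (ω.vshift y).t ω.t),
      ‖(ω.vshift y).f (min r (ω.vshift y).t) - ω.f (min r ω.t)‖^2) = 0 := by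
    rw [h1, max_self]
    have hae : ∀ᵐ r : ℝ, r ∈ Set.uIoc (0:ℝ) ω.t →
        ‖(ω.vshift y).f (min r ω.t) - ω.f (min r ω.t)‖^2 = (0:ℝ) := by
      have hne : ∀ᵐ r : ℝ, r ≠ ω.t := by
        rw [MeasureTheory.ae_iff]
        simp only [not_not, ne_eq, Set.setOf_eq_eq_singleton]
        exact Real.volume_singleton
      filter_upwards [hne] with r hr hmem
      rw [Set.uIoc_of_le ht] at hmem
      have hrt : r < ω.t := lt_of_le_of_ne hmem.2 hr
      rw [min_eq_left hrt.le]
      simp [PPath.vshift, hrt]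
    rw [intervalIntegral.integral_congr_ae hae]
    simp
  unfold pdist
  rw [h3, h2, add_zero]

end Aux

section Key

variable {d : ℕ}

lemma key_P2plus {T : ℝ} {Q : Set (EucSp d)} (U : C10 d T Q) (ω : PPath d)
    (hω : ω.memQ T Q) (p : EucSp d) (X : Matrix (Fin d) (Fin d) ℝ) (hX : X.IsSymm)
    (hB : (fun y => max (U.u (ω.vshift y) - U.u ω - ⟪p, y⟫ - (1/2) * quadForm X y) 0)
      =o[nhdsWithin 0 {y : EucSp d | ω.f ω.t + y ∈ Q}] (fun y : EucSp d => ‖y‖^2)) :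
    P2plus Q U.u ω (U.Dt ω) p X := by
  obtain ⟨ht0, htT, hrc, hmem⟩ := id hω
  have hQt : ω.f ω.t ∈ Q := hmem ω.t ⟨ht0, le_rfl⟩
  have hmem0 : (ω.vshift 0).memQ T Q := memQ_vshift hω (by simpa using hQt)
  have huni := hderiv_unique (U.hasDt ω hω) (U.hasDt _ hmem0) (vshift_zero_freeze ω)
  set a := U.Dt ω with ha
  refine ⟨hX, ?_⟩
  rw [Asymptotics.isLittleO_iff]
  intro c hc
  set l := nhdsWithin (0 : ℝ × EucSp d)
    {q : ℝ × EucSp d | 0 ≤ q.1 ∧ ω.f ω.t + q.2 ∈ Q} with hl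
  -- B part pulled back along snd
  have hsnd : Tendsto (fun q : ℝ × EucSp d => q.2) l
      (nhdsWithin 0 {y : EucSp d | ω.f ω.t + y ∈ Q}) := by
    rw [tendsto_nhdsWithin_iff]
    constructor
    · exact (continuous_snd.tendsto _).mono_left nhdsWithin_le_nhds
    · filter_upwards [eventually_mem_nhdsWithin] with q hq
      exact hq.2
  have hBq := hsnd.eventually (hB.def (half_pos hc))
  -- Dt continuity
  have hcDt : Tendsto (fun z : ℝ × EucSp d => U.Dt (ω.ext z))
      (nhdsWithin (ω.t, ω.f ω.t) (Set.Ico ω.t T ×ˢ Q)) (nhds a) := by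
    have h0 := (U.cont_Dt ω hω) (ω.t, ω.f ω.t) ⟨⟨le_rfl, htT⟩, hQt⟩
    have hval : U.Dt (ω.ext (ω.t, ω.f ω.t)) = a := by
      have h1 : ω.ext (ω.t, ω.f ω.t) = ω.vshift 0 := by
        have := ext_self ω 0
        rwa [add_zero] at this
      rw [h1, huni.2]
    rw [ContinuousWithinAt, hval] at h0
    exact h0
  obtain ⟨r, hr, hrprop⟩ := Metric.tendsto_nhdsWithin_nhds.1 hcDt (c/2) (half_pos hc)
  set r' := min r (T - ω.t) with hr'def
  have hr' : 0 < r' := lt_min hr (by linarith)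
  have evS : ∀ᶠ q in l, q ∈ {q : ℝ × EucSp d | 0 ≤ q.1 ∧ ω.f ω.t + q.2 ∈ Q} :=
    eventually_mem_nhdsWithin
  have evBall : ∀ᶠ q in l, dist q 0 < r' :=
    Filter.eventually_of_mem (nhdsWithin_le_nhds (Metric.ball_mem_nhds _ hr'))
      (fun q hq => Metric.mem_ball.mp hq)
  filter_upwards [evS, evBall, hBq] with q hqS hqB hqb
  obtain ⟨δ, y⟩ := q
  simp only [Set.mem_setOf_eq] at hqS
  obtain ⟨hδ0, hyQ⟩ := hqS
  have hdist : max (dist δ 0) (dist y 0) < r' := by rwa [Prod.dist_eq] at hqB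
  have hδr : δ < r' := by
    have := lt_of_le_of_lt (le_max_left (dist δ 0) (dist y 0)) hdist
    rwa [Real.dist_eq, sub_zero, abs_of_nonneg hδ0] at this
  have hyr : ‖y‖ < r' := by
    have := lt_of_le_of_lt (le_max_right (dist δ 0) (dist y 0)) hdist
    rwa [dist_zero_right] at this
  have hδr1 : δ < r := lt_of_lt_of_le hδr (min_le_left _ _)
  have hδT : δ < T - ω.t := lt_of_lt_of_le hδr (min_le_right _ _)
  have hyr1 : ‖y‖ < r := lt_of_lt_of_le hyr (min_le_left _ _)
  set φ : ℝ → ℝ := fun s => U.u ((ω.vshift y).freeze s) with hφdef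
  -- continuity of φ on [0, δ]
  have hφc : ContinuousOn φ (Set.Icc 0 δ) := by
    have h1 : ContinuousOn (fun s : ℝ => (ω.t + s, ω.f ω.t + y)) (Set.Icc 0 δ) := by
      fun_prop
    have hmaps : ∀ s ∈ Set.Icc (0:ℝ) δ,
        (ω.t + s, ω.f ω.t + y) ∈ Set.Ico ω.t T ×ˢ Q := by
      intro s hs
      have hsT : ω.t + s < T := by linarith [hs.2]
      exact ⟨⟨le_add_of_nonneg_right hs.1, hsT⟩, hyQ⟩
    have h2 := (U.cont_u ω hω).comp h1 hmaps
    simp only [Function.comp_def, ext_eq] at h2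
    exact h2
  -- one-sided derivative of φ
  have hφd : ∀ s ∈ Set.Ico (0:ℝ) δ,
      HasDerivWithinAt φ (U.Dt ((ω.vshift y).freeze s)) (Set.Ici s) s := by
    intro s hs
    have hsT' : ω.t + s < T := by linarith [hs.2]
    have hmems : ((ω.vshift y).freeze s).memQ T Q :=
      memQ_vshift_freeze hω hyQ hs.1 hsT'
    have hH := U.hasDt _ hmems
    rw [HasHDeriv] at hH
    have hfr : ∀ σ, ((ω.vshift y).freeze s).freeze σ = (ω.vshift y).freeze (s + σ) :=
      freeze_freeze _ hs.1
    simp only [hfr] at hH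
    have htend : Tendsto (fun w : ℝ => w - s) (nhdsWithin s (Set.Ioi s))
        (nhdsWithin 0 (Set.Ioi 0)) := by
      rw [tendsto_nhdsWithin_iff]
      constructor
      · have h0 : Tendsto (fun w : ℝ => w - s) (nhds s) (nhds (s - s)) :=
          Filter.Tendsto.sub_const tendsto_id s
        rw [sub_self] at h0
        exact h0.mono_left nhdsWithin_le_nhds
      · filter_upwards [eventually_mem_nhdsWithin] with w hw
        exact sub_pos.2 (Set.mem_Ioi.mp hw)
    have hcomp := hH.comp_tendsto htend
    have hsw : ∀ w : ℝ, s + (w - s) = w := fun w => by ring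
    simp only [Function.comp_def, hsw] at hcomp
    have hpure : (fun w : ℝ => U.u ((ω.vshift y).freeze w)
        - U.u ((ω.vshift y).freeze s) - U.Dt ((ω.vshift y).freeze s) * (w - s))
        =o[pure s] (fun w : ℝ => w - s) := by
      rw [Asymptotics.isLittleO_pure]
      simp
    have hIci : (fun w : ℝ => U.u ((ω.vshift y).freeze w)
        - U.u ((ω.vshift y).freeze s) - U.Dt ((ω.vshift y).freeze s) * (w - s))
        =o[nhdsWithin s (Set.Ici s)] (fun w : ℝ => w - s) := by
      rw [← Set.Ioi_insert, nhdsWithin_insert]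
      exact hpure.sup hcomp
    rw [hasDerivWithinAt_iff_isLittleO]
    exact hIci.congr_left fun w => by
      simp only [hφdef, smul_eq_mul]; ring
  -- mean value inequality
  have hψc : ContinuousOn (fun w => φ w - a * w) (Set.Icc 0 δ) :=
    hφc.sub ((continuous_const.mul continuous_id).continuousOn)
  have hψd : ∀ s ∈ Set.Ico (0:ℝ) δ, HasDerivWithinAt (fun w => φ w - a * w)
      (U.Dt ((ω.vshift y).freeze s) - a) (Set.Ici s) s := by
    intro s hs
    have h := (hφd s hs).sub ((hasDerivWithinAt_id s (Set.Ici s)).const_mul a)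
    simp only [mul_one] at h
    exact h
  have hbound : ∀ s ∈ Set.Ico (0:ℝ) δ, ‖U.Dt ((ω.vshift y).freeze s) - a‖ ≤ c/2 := by
    intro s hs
    have hsr : s < r := lt_of_lt_of_le (lt_of_lt_of_le hs.2 hδr.le) (min_le_left _ _)
    have hsT' : ω.t + s < T := by linarith [hs.2]
    have hdlt : dist ((ω.t + s, ω.f ω.t + y) : ℝ × EucSp d) (ω.t, ω.f ω.t) < r := by
      rw [Prod.dist_eq]
      have h1 : dist (ω.t + s) ω.t = s := by
        rw [Real.dist_eq]
        simp [abs_of_nonneg hs.1]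
      have h2 : dist (ω.f ω.t + y) (ω.f ω.t) = ‖y‖ := by
        rw [dist_eq_norm]
        simp
      rw [h1, h2]
      exact max_lt hsr hyr1
    have hz := hrprop ⟨⟨le_add_of_nonneg_right hs.1, hsT'⟩, hyQ⟩ hdlt
    rw [ext_eq] at hz
    rw [Real.dist_eq] at hz
    rw [Real.norm_eq_abs]
    exact hz.le
  have hm := norm_image_sub_le_of_norm_deriv_right_le_segment hψc hψd hbound δ
    (Set.right_mem_Icc.2 hδ0)
  have hφ0 : φ 0 = U.u (ω.vshift y) := by
    rw [hφdef]
    simp only [freeze_vshift_zero]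
  rw [mul_zero, sub_zero, sub_zero, Real.norm_eq_abs] at hm
  have hA : φ δ - a * δ - φ 0 ≤ c/2 * δ := le_trans (le_abs_self _) hm
  -- B bound
  have hynn : (0:ℝ) ≤ ‖y‖^2 := by positivity
  have hBle : U.u (ω.vshift y) - U.u ω - ⟪p, y⟫ - 1/2 * quadForm X y ≤ c/2 * ‖y‖^2 := by
    have h1 := hqb
    rw [Real.norm_eq_abs, abs_of_nonneg (le_max_right _ _), Real.norm_eq_abs,
      abs_of_nonneg hynn] at h1
    exact le_trans (le_max_left _ _) h1
  -- conclude
  have hEfz : U.u ((ω.vshift y).freeze δ) = φ δ := rfl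
  have hEle : U.u ((ω.vshift y).freeze δ) - U.u ω - a * δ - ⟪p, y⟫
      - 1/2 * quadForm X y ≤ c/2 * δ + c/2 * ‖y‖^2 := by
    rw [hEfz]
    have := hφ0
    linarith
  have hnn2 : (0:ℝ) ≤ δ + ‖y‖^2 := add_nonneg hδ0 hynn
  rw [Real.norm_eq_abs, Real.norm_eq_abs, abs_of_nonneg (le_max_right _ _),
    abs_of_nonneg hnn2]
  refine max_le (by nlinarith) (by positivity)

end Key

/-- **Vertical semijets of `ℂ^{1,0}` path functionals yield path parabolic
semijets** (Lemma 5.5): for `u ∈ ℂ^{1,0}(Λ_{Q̄})`, `ω̂_{t̂} ∈ Λ_Q`, `t̂ ∈ (0,T)`,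
and `ū(x) := u((ω̂_{t̂})^x)`, if `(p, X) ∈ J̄^{2,+}ū(0)` then
`(D_t u(ω̂_{t̂}), p, X) ∈ P̄^{2,+}u(ω̂_{t̂})`. -/
theorem vertical_semijet_to_path_parabolic_semijet
    {d : ℕ} {T : ℝ} (hT : 0 < T) {Q : Set (EucSp d)}
    (hQopen : IsOpen Q) (hQbdd : Bornology.IsBounded Q)
    (U : C10 d T Q) (ωh : PPath d) (hωh : ωh.memQ T Q) (ht : 0 < ωh.t)
    (p : EucSp d) (X : Matrix (Fin d) (Fin d) ℝ)
    (hJ : J2plusBar {x : EucSp d | ωh.f ωh.t + x ∈ Q}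
      (fun x => U.u (ωh.vshift x)) 0 p X) :
    P2plusBar T Q U.u ωh (U.Dt ωh) p X := by
  obtain ⟨yn, pn, Xn, hjn, hyn, hfyn, hpn, hXn⟩ := hJ
  have hQt : ωh.f ωh.t ∈ Q := hωh.2.2.2 ωh.t ⟨hωh.1, le_rfl⟩
  have hmem0 : (ωh.vshift 0).memQ T Q := memQ_vshift hωh (by simpa using hQt)
  have huni := hderiv_unique (U.hasDt ωh hωh) (U.hasDt _ hmem0) (vshift_zero_freeze ωh)
  refine ⟨fun n => ωh.vshift (yn n), fun n => U.Dt (ωh.vshift (yn n)), pn, Xn,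
    fun n => memQ_vshift hωh (hjn n).1, ?_, ?_, ?_, ?_, ?_, hpn, hXn⟩
  · -- P2plus for each n
    intro n
    refine key_P2plus U _ (memQ_vshift hωh (hjn n).1) (pn n) (Xn n) (hjn n).2.1 ?_
    have h2 := (hjn n).2.2
    have hset : {y : EucSp d | yn n + y ∈ {x : EucSp d | ωh.f ωh.t + x ∈ Q}}
        = {y : EucSp d | (ωh.vshift (yn n)).f (ωh.vshift (yn n)).t + y ∈ Q} := by
      ext y
      simp only [Set.mem_setOf_eq, vshift_f_self, add_assoc]
    rw [hset] at h2
    refine h2.congr_left fun y => ?_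
    simp only [vshift_vshift]
  · -- times converge (constant)
    exact tendsto_const_nhds
  · -- pdist converges to 0
    have hpd : ∀ n, pdist (ωh.vshift (yn n)) ωh = ‖yn n‖^2 :=
      fun n => pdist_vshift ωh (yn n) hωh.1
    simp only [hpd]
    have hcont : Continuous fun y : EucSp d => ‖y‖^2 := by continuity
    have := (hcont.tendsto 0).comp hyn
    simpa [Function.comp_def] using this
  · -- u values converge
    rw [← huni.1]
    exact hfyn
  · -- Dt values converge
    have hc := (U.cont_Dt ωh hωh) (ωh.t, ωh.f ωh.t) ⟨⟨le_rfl, hωh.2.1⟩, hQt⟩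
    have hseq : Tendsto (fun n => ((ωh.t, ωh.f ωh.t + yn n) : ℝ × EucSp d)) atTop
        (nhdsWithin (ωh.t, ωh.f ωh.t) (Set.Ico ωh.t T ×ˢ Q)) := by
      rw [tendsto_nhdsWithin_iff]
      constructor
      · have h1 : Tendsto (fun n => ωh.f ωh.t + yn n) atTop (nhds (ωh.f ωh.t)) := by
          simpa using tendsto_const_nhds.add hyn
        exact tendsto_const_nhds.prodMk_nhds h1
      · exact Filter.Eventually.of_forall fun n => ⟨⟨le_rfl, hωh.2.1⟩, (hjn n).1⟩
    have hcomp := hc.tendsto.comp hseq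
    have hv : ωh.ext (ωh.t, ωh.f ωh.t) = ωh.vshift 0 := by
      have := ext_self ωh 0
      rwa [add_zero] at this
    simp only [Function.comp_def, ext_self] at hcomp
    rw [hv, huni.2] at hcomp
    exact hcomp
end
end
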